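/- Let J*_k be the cost of a charging plan {(b*_ℓ, t*_ℓ)}_{ℓ=k}^N evaluated with estimated waiting times w̃_ℓ^k and Ĵ_k the cost of the same plan evaluated with actual waiting times ŵ_ℓ^k, where w̃_k^k = ŵ_k^k. Then |Ĵ_k − J*_k| ≤ (ξ + γ) Σ_{ℓ=k+1}^N |ŵ_ℓ^k − w̃_ℓ^k|. -/
import Mathlib


/-- Cost sensitivity to waiting-time estimate errors.  For a fixed charging plan, let
`J(w) = Σ_{ℓ=k}^N [ξ b_ℓ (2 d_ℓ + t_ℓ + w_ℓ) + θ_ℓ b_ℓ t_ℓ] + max{γ(a_{N+1}(w) − a_end), 0}`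
with `a_{N+1}(w) = a_k + Σ_{ℓ=k}^N [b_ℓ(t_ℓ + w_ℓ + 2 d_ℓ) + τ_ℓ]`.  If `wt_k = wh_k`, then
`|J(wh) − J(wt)| ≤ (ξ + γ) Σ_{ℓ=k+1}^N |wh_ℓ − wt_ℓ|`. -/
theorem cost_error_bound
    (k N : ℕ) (hkN : k ≤ N)
    (b t d τ θ wt wh : ℕ → ℝ) (ξ γ ak aend : ℝ)
    (hb : ∀ ℓ, b ℓ = 0 ∨ b ℓ = 1) (ht : ∀ ℓ, 0 ≤ t ℓ) (hd : ∀ ℓ, 0 ≤ d ℓ)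
    (hθ : ∀ ℓ, 0 ≤ θ ℓ) (hwt : ∀ ℓ, 0 ≤ wt ℓ) (hwh : ∀ ℓ, 0 ≤ wh ℓ)
    (hξ : 0 ≤ ξ) (hγ : 0 ≤ γ) (hwk : wt k = wh k)
    (J : (ℕ → ℝ) → ℝ)
    (hJ : ∀ w, J w =
      (∑ ℓ ∈ Finset.Icc k N, (ξ * b ℓ * (2 * d ℓ + t ℓ + w ℓ) + θ ℓ * b ℓ * t ℓ)) +
      max (γ * ((ak + ∑ ℓ ∈ Finset.Icc k N,
        (b ℓ * (t ℓ + w ℓ + 2 * d ℓ) + τ ℓ)) - aend)) 0) :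
    |J wh - J wt| ≤ (ξ + γ) * ∑ ℓ ∈ Finset.Icc (k+1) N, |wh ℓ - wt ℓ| := by
  set S : ℝ := ∑ ℓ ∈ Finset.Icc k N, b ℓ * (wh ℓ - wt ℓ) with hS
  have hkey : |S| ≤ ∑ ℓ ∈ Finset.Icc (k+1) N, |wh ℓ - wt ℓ| := by
    calc |S| ≤ ∑ ℓ ∈ Finset.Icc k N, |b ℓ * (wh ℓ - wt ℓ)| :=
          Finset.abs_sum_le_sum_abs _ _
      _ = |b k * (wh k - wt k)| + ∑ ℓ ∈ Finset.Ioc k N, |b ℓ * (wh ℓ - wt ℓ)| := by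
          rw [Finset.Icc_eq_cons_Ioc hkN, Finset.sum_cons]
      _ ≤ ∑ ℓ ∈ Finset.Icc (k+1) N, |wh ℓ - wt ℓ| := by
          rw [hwk, sub_self, mul_zero, abs_zero, zero_add, Finset.Icc_add_one_left_eq_Ioc]
          apply Finset.sum_le_sum
          intro i _
          rw [abs_mul]
          have : |b i| ≤ 1 := by rcases hb i with h | h <;> simp [h]
          nlinarith [abs_nonneg (wh i - wt i)]
  have h1 : (∑ ℓ ∈ Finset.Icc k N, (ξ * b ℓ * (2 * d ℓ + t ℓ + wh ℓ) + θ ℓ * b ℓ * t ℓ))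
      - (∑ ℓ ∈ Finset.Icc k N, (ξ * b ℓ * (2 * d ℓ + t ℓ + wt ℓ) + θ ℓ * b ℓ * t ℓ))
      = ξ * S := by
    rw [hS, ← Finset.sum_sub_distrib, Finset.mul_sum]
    exact Finset.sum_congr rfl fun i _ => by ring
  have h2 : (γ * ((ak + ∑ ℓ ∈ Finset.Icc k N, (b ℓ * (t ℓ + wh ℓ + 2 * d ℓ) + τ ℓ)) - aend))
      - (γ * ((ak + ∑ ℓ ∈ Finset.Icc k N, (b ℓ * (t ℓ + wt ℓ + 2 * d ℓ) + τ ℓ)) - aend))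
      = γ * S := by
    have hsum : (∑ ℓ ∈ Finset.Icc k N, (b ℓ * (t ℓ + wh ℓ + 2 * d ℓ) + τ ℓ))
        - (∑ ℓ ∈ Finset.Icc k N, (b ℓ * (t ℓ + wt ℓ + 2 * d ℓ) + τ ℓ)) = S := by
      rw [hS, ← Finset.sum_sub_distrib]
      exact Finset.sum_congr rfl fun i _ => by ring
    rw [← hsum]; ring
  rw [hJ, hJ]
  set A := γ * ((ak + ∑ ℓ ∈ Finset.Icc k N, (b ℓ * (t ℓ + wh ℓ + 2 * d ℓ) + τ ℓ)) - aend)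
  set B := γ * ((ak + ∑ ℓ ∈ Finset.Icc k N, (b ℓ * (t ℓ + wt ℓ + 2 * d ℓ) + τ ℓ)) - aend)
  have hmax : |max A 0 - max B 0| ≤ |A - B| := abs_max_sub_max_le_abs A B 0
  calc |_| = |ξ * S + (max A 0 - max B 0)| := by rw [← h1]; congr 1; ring
    _ ≤ |ξ * S| + |max A 0 - max B 0| := abs_add_le _ _
    _ ≤ |ξ * S| + |A - B| := by linarith
    _ = ξ * |S| + γ * |S| := by
        rw [h2, abs_mul, abs_mul, abs_of_nonneg hξ, abs_of_nonneg hγ]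
    _ = (ξ + γ) * |S| := by ring
    _ ≤ (ξ + γ) * ∑ ℓ ∈ Finset.Icc (k+1) N, |wh ℓ - wt ℓ| := by
        apply mul_le_mul_of_nonneg_left hkey (by linarith)
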